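/- Let X be a real vector space with seminorms ‖·‖ (the weak norm) and ‖·‖_s (the strong seminorm), let i : X → ℝ be a linear functional with |i(g)| ≤ ‖g‖ for all g ∈ X, and let 𝟙 ∈ X satisfy ‖𝟙‖ = 1 and i(𝟙) = 1. Let L : X → X be linear with i(L g) = i(g) for all g and ‖L g‖ ≤ N ‖g‖ for all g, where N ≥ 0. Let P : X → X be linear with ‖P g‖ ≤ ‖g‖ and ‖P g − g‖ ≤ K h ‖g‖_s for all g ∈ X, where K ≥ 0 and h > 0, and define Q g := P L P g + (i(g) − i(P L P g))·𝟙. Let u ∈ X satisfy L u = u and i(u) = 1, and let u_h ∈ X satisfy i(u_h) = 1 and ‖Q u_h − u_h‖ ≤ ε. Let (C_k)_{k≥0} be nonnegative real numbers such that ‖Q^k v‖ ≤ C_k ‖v‖ for every v ∈ X with i(v) = 0 and every k ≥ 0, and suppose Σ_{k=0}^∞ C_k < ∞. Then ‖u − u_h‖ ≤ (Σ_{k=0}^∞ C_k) · (2 K h (1 + N) ‖u‖_s + ε). -/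

import Mathlib

/-- Fixed point approximation error estimate (Theorem 3.1 version): if `u` is the
fixed point of `L` with `i u = 1`, `u_h` is an approximate fixed point of the
`i`-preserving discretized operator `Q` with `i u_h = 1` and residual at most `ε`,
and `C_k` bound the norms of the iterates of `Q` on the kernel of `i`, with
`Σ C_k < ∞`, then `‖u - u_h‖ ≤ (Σ C_k)(2 K h (1 + N) ‖u‖_s + ε)`. -/
theorem fixed_point_error_estimate
    {X : Type*} [AddCommGroup X] [Module ℝ X]
    (nw ns : Seminorm ℝ X) (i : X →ₗ[ℝ] ℝ) (one : X)
    (hone : nw one = 1) (hione : i one = 1)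
    (hi : ∀ g : X, |i g| ≤ nw g)
    (L P : X →ₗ[ℝ] X) (N K h : ℝ) (hN : 0 ≤ N) (hK : 0 ≤ K) (hh : 0 < h)
    (hiL : ∀ g : X, i (L g) = i g)
    (hLbound : ∀ g : X, nw (L g) ≤ N * nw g)
    (hPw : ∀ g : X, nw (P g) ≤ nw g)
    (hPapprox : ∀ g : X, nw (P g - g) ≤ K * h * ns g)
    (Q : X → X)
    (hQ : ∀ g : X, Q g = P (L (P g)) + (i g - i (P (L (P g)))) • one)
    (u uh : X) (hu : L u = u) (hiu : i u = 1) (hiuh : i uh = 1)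
    (ε : ℝ) (hres : nw (Q uh - uh) ≤ ε)
    (C : ℕ → ℝ) (hCpos : ∀ k, 0 ≤ C k)
    (hC : ∀ v : X, i v = 0 → ∀ k : ℕ, nw (Q^[k] v) ≤ C k * nw v)
    (hsum : Summable C) :
    nw (u - uh) ≤ (∑' k, C k) * (2 * K * h * (1 + N) * ns u + ε) := by
  set S := ∑' k, C k with hS
  set e := u - uh with he
  set d := (Q uh - uh) - (Q u - u) with hd
  -- i is preserved by Q
  have hiQ : ∀ g, i (Q g) = i g := by
    intro g
    rw [hQ]
    simp [hione]
  -- Q is subtractive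
  have hQsub : ∀ a b : X, Q (a - b) = Q a - Q b := by
    intro a b
    rw [hQ, hQ, hQ]
    simp only [map_sub]
    module
  have hitsub : ∀ n : ℕ, ∀ a b : X, Q^[n] (a - b) = Q^[n] a - Q^[n] b := by
    intro n
    induction n with
    | zero => intro a b; simp
    | succ n ih =>
      intro a b
      rw [Function.iterate_succ_apply, hQsub, ih]
      rfl
  have base : Q e + d = e := by
    rw [he, hd, hQsub]; abel
  have hQe : Q e = e - d := eq_sub_of_add_eq base
  have key : ∀ n : ℕ, e = Q^[n] e + ∑ k ∈ Finset.range n, Q^[k] d := by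
    intro n
    induction n with
    | zero => simp
    | succ n ih =>
      rw [Finset.sum_range_succ, Function.iterate_succ_apply, hQe, hitsub]
      conv_lhs => rw [ih]
      abel
  have hie : i e = 0 := by simp [he, map_sub, hiu, hiuh]
  have hid : i d = 0 := by simp [hd, map_sub, hiQ]
  -- bound on nw d
  have hQu : nw (Q u - u) ≤ 2 * K * h * (1 + N) * ns u := by
    have h1 : nw (P u - u) ≤ K * h * ns u := hPapprox u
    have heq : P (L (P u)) - P u = P (L (P u - u)) := by
      rw [map_sub, map_sub, hu]
    have h2 : nw (P (L (P u)) - P u) ≤ N * (K * h * ns u) := by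
      rw [heq]
      calc nw (P (L (P u - u))) ≤ nw (L (P u - u)) := hPw _
        _ ≤ N * nw (P u - u) := hLbound _
        _ ≤ N * (K * h * ns u) := by
            exact mul_le_mul_of_nonneg_left h1 hN
    have h3 : nw (P (L (P u)) - u) ≤ (1 + N) * (K * h * ns u) := by
      have : P (L (P u)) - u = (P (L (P u)) - P u) + (P u - u) := by abel
      rw [this]
      calc nw _ ≤ nw (P (L (P u)) - P u) + nw (P u - u) := map_add_le_add nw _ _
        _ ≤ N * (K * h * ns u) + K * h * ns u := add_le_add h2 h1
        _ = (1 + N) * (K * h * ns u) := by ring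
    have h4 : |i u - i (P (L (P u)))| ≤ nw (P (L (P u)) - u) := by
      have : i u - i (P (L (P u))) = -(i (P (L (P u)) - u)) := by
        rw [map_sub]; ring
      rw [this, abs_neg]
      exact hi _
    have h5 : Q u - u = (P (L (P u)) - u) + (i u - i (P (L (P u)))) • one := by
      rw [hQ]; abel
    rw [h5]
    calc nw _ ≤ nw (P (L (P u)) - u) + nw ((i u - i (P (L (P u)))) • one) :=
        map_add_le_add nw _ _
      _ = nw (P (L (P u)) - u) + |i u - i (P (L (P u)))| * nw one := by
          rw [map_smul_eq_mul]; rfl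
      _ ≤ (1 + N) * (K * h * ns u) + (1 + N) * (K * h * ns u) * 1 := by
          gcongr
          · exact h4.trans h3
          · exact le_of_eq hone
      _ = 2 * K * h * (1 + N) * ns u := by ring
  have hdbound : nw d ≤ 2 * K * h * (1 + N) * ns u + ε := by
    calc nw d ≤ nw (Q uh - uh) + nw (Q u - u) := map_sub_le_add nw _ _
      _ ≤ ε + 2 * K * h * (1 + N) * ns u := add_le_add hres hQu
      _ = _ := by ring
  have hSge : ∀ n : ℕ, ∑ k ∈ Finset.range n, C k ≤ S := fun n =>
    Summable.sum_le_tsum _ (fun k _ => hCpos k) hsum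
  have hS0 : 0 ≤ S := tsum_nonneg hCpos
  have hd0 : 0 ≤ nw d := apply_nonneg nw d
  -- main bound for each n
  have hsumle : ∀ n : ℕ, nw (∑ k ∈ Finset.range n, Q^[k] d) ≤
      ∑ k ∈ Finset.range n, nw (Q^[k] d) := by
    intro n
    induction n with
    | zero => simp
    | succ n ih =>
      rw [Finset.sum_range_succ, Finset.sum_range_succ]
      exact (map_add_le_add nw _ _).trans (add_le_add ih le_rfl)
  have hn : ∀ n : ℕ, nw e ≤ C n * nw e + S * nw d := by
    intro n
    have := key n
    calc nw e = nw (Q^[n] e + ∑ k ∈ Finset.range n, Q^[k] d) := by rw [← this]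
      _ ≤ nw (Q^[n] e) + nw (∑ k ∈ Finset.range n, Q^[k] d) := map_add_le_add nw _ _
      _ ≤ C n * nw e + ∑ k ∈ Finset.range n, nw (Q^[k] d) := by
          gcongr
          · exact hC e hie n
          · exact hsumle n
      _ ≤ C n * nw e + ∑ k ∈ Finset.range n, C k * nw d := by
          gcongr with k hk
          exact hC d hid k
      _ ≤ C n * nw e + S * nw d := by
          rw [← Finset.sum_mul]
          gcongr
          exact hSge n
  have hlim : Filter.Tendsto (fun n => C n * nw e + S * nw d) Filter.atTop
      (nhds (0 * nw e + S * nw d)) :=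
    Filter.Tendsto.add (hsum.tendsto_atTop_zero.mul_const _) tendsto_const_nhds
  have hmain : nw e ≤ S * nw d := by
    have := ge_of_tendsto' hlim hn
    simpa using this
  calc nw (u - uh) = nw e := rfl
    _ ≤ S * nw d := hmain
    _ ≤ S * (2 * K * h * (1 + N) * ns u + ε) := by
        exact mul_le_mul_of_nonneg_left hdbound hS0
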